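/- Let f : ℕ × ℕ → ℝ satisfy: f(1,2) = 1 and f(1, N+1) = (1 - 1/N)·f(1,N) + 1 for all N ≥ 2; f(k,k) = 1 for all k ≥ 2; f(0,N) = 0 for all N; and the recurrence f(k, N+1) = (1 - k/N)·f(k,N) + ((k-1)/N)·f(k-1,N) for all integers N ≥ 2 and 2 ≤ k ≤ N. Then f(k,N) = N/(k(k+1)) for all integers N ≥ 2 and 1 ≤ k ≤ N-1. (The average degree distribution of a random recursive hypergraph is strictly linear in N with no sub-leading corrections.) -/

import Mathlib

/-- The average degree distribution of an RRH is strictly linear in `N`: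
`f(k,N) = N/(k(k+1))` for all `1 ≤ k ≤ N-1`. -/
theorem rrh_average_degree_distribution (f : ℕ × ℕ → ℝ)
    (h12 : f (1, 2) = 1)
    (hrec1 : ∀ N : ℕ, 2 ≤ N → f (1, N + 1) = (1 - 1 / (N : ℝ)) * f (1, N) + 1)
    (hdiag : ∀ k : ℕ, 2 ≤ k → f (k, k) = 1)
    (hzero : ∀ N : ℕ, f (0, N) = 0)
    (hrec : ∀ N : ℕ, 2 ≤ N → ∀ k : ℕ, 2 ≤ k → k ≤ N →
      f (k, N + 1) = (1 - (k : ℝ) / N) * f (k, N) + ((k : ℝ) - 1) / N * f (k - 1, N)) :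
    ∀ N : ℕ, 2 ≤ N → ∀ k : ℕ, 1 ≤ k → k ≤ N - 1 →
      f (k, N) = (N : ℝ) / ((k : ℝ) * ((k : ℝ) + 1)) := by
  intro N hN
  induction N, hN using Nat.le_induction with
  | base =>
    intro k hk1 hk2
    interval_cases k
    · norm_num [h12]
  | succ N hN ih =>
    intro k hk1 hk2
    have hNpos : (0 : ℝ) < N := by positivity
    have hNne : (N : ℝ) ≠ 0 := ne_of_gt hNpos
    have hk2' : k ≤ N := by omega
    rcases eq_or_lt_of_le hk1 with h1 | h1
    · -- k = 1
      subst h1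
      have hf1 : f (1, N) = (N : ℝ) / 2 := by
        rcases eq_or_lt_of_le hN with h2 | h2
        · rw [← h2]; norm_num [h12]
        · have := ih 1 le_rfl (by omega)
          rw [this]; norm_num
      rw [hrec1 N hN, hf1]
      push_cast; field_simp
      ring
    · -- 2 ≤ k
      have hk : 2 ≤ k := h1
      have hkR : (2 : ℝ) ≤ (k : ℝ) := by exact_mod_cast hk
      have hkne : (k : ℝ) ≠ 0 := by linarith
      have hkm1 : ((k - 1 : ℕ) : ℝ) = (k : ℝ) - 1 := by
        have : (1 : ℕ) ≤ k := hk1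
        push_cast [this]; ring
      rcases eq_or_lt_of_le hk2' with heq | hlt
      · -- k = N
        subst heq
        have hfm : f (k - 1, k) = (k : ℝ) / (((k : ℝ) - 1) * (k : ℝ)) := by
          have := ih (k - 1) (by omega) (by omega)
          rw [this, hkm1]; ring_nf
        rw [hrec k hN k hk le_rfl, hdiag k hk, hfm]
        rw [div_self hkne]
        have h1ne : (k : ℝ) - 1 ≠ 0 := by linarith
        push_cast; field_simp
        ring
      · -- k < N
        have hfk := ih k hk1 (by omega)
        have hfkm := ih (k - 1) (by omega) (by omega)
        rw [hrec N hN k hk (by omega), hfk, hfkm, hkm1]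
        have h1ne : (k : ℝ) - 1 ≠ 0 := by linarith
        have hk1ne : (k : ℝ) + 1 ≠ 0 := by positivity
        push_cast; field_simp
        ring_nf; field_simp; ring
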